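/- (Fenchel conjugate of the partially linearized function.) The convex (Fenchel) conjugate of f̄_β, namely f̄_β*(t) = sup_{u ∈ dom(f̄_β)} (ut − f̄_β(u)), satisfies f̄_β*(t) = f*(t) + C'_{f,β} for t ≤ f'(1/(1+β)) and f̄_β*(t) = +∞ for t > f'(1/(1+β)), where f* is the Fenchel conjugate of f and C'_{f,β} = f(1/(1+β)) − f'(1/(1+β))·(1/(1+β)) + f'(1/(1+β)). -/

import Mathlib

/-- The partially linearized function `f̄_β` (see the paper, Section 5.1). -/
noncomputable def partiallyLinearized (f f' : ℝ → ℝ) (β : ℝ) : ℝ → ℝ := fun u =>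
  if u ≤ 1 / (1 + β) then
    f u + (-f (1 / (1 + β)) + f' (1 / (1 + β)) * (1 / (1 + β)) - f' (1 / (1 + β)))
  else f' (1 / (1 + β)) * u - f' (1 / (1 + β))

/-- The Fenchel conjugate of a function `g` defined on `(0,∞)`, with values in `EReal`:
`g*(t) = sup_{u > 0} (u·t − g(u))`. -/
noncomputable def fenchelIoi (g : ℝ → ℝ) (t : ℝ) : EReal :=
  ⨆ u : Set.Ioi (0 : ℝ), (((u : ℝ) * t - g (u : ℝ) : ℝ) : EReal)

/-- Auxiliary general version of the Fenchel conjugate computation. -/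
theorem fenchel_aux (f f' g : ℝ → ℝ) (a : ℝ) (ha : 0 < a)
    (hconv : ConvexOn ℝ (Set.Ioi 0) f)
    (hderiv : HasDerivAt f (f' a) a) (t : ℝ)
    (hg : ∀ u, g u = if u ≤ a then f u + (-f a + f' a * a - f' a) else f' a * u - f' a) :
    (t ≤ f' a → fenchelIoi g t = fenchelIoi f t + ((f a - f' a * a + f' a : ℝ) : EReal)) ∧
    (f' a < t → fenchelIoi g t = ⊤) := by
  set m := f' a with hm
  set C' : ℝ := f a - m * a + m with hC'
  -- convexity key inequality
  have hkey : ∀ u, a < u → f a + m * (u - a) ≤ f u := by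
    intro u hu
    have hs := hconv.le_slope_of_hasDerivAt (Set.mem_Ioi.2 ha)
      (Set.mem_Ioi.2 (ha.trans hu)) hu hderiv
    rw [slope_def_field] at hs
    have h1 : (0:ℝ) < u - a := by linarith
    have := (le_div_iff₀ h1).mp hs
    linarith
  constructor
  · intro ht
    apply le_antisymm
    · refine iSup_le ?_
      rintro ⟨u, hu⟩
      simp only [hg]
      by_cases hua : u ≤ a
      · rw [if_pos hua]
        have h1 : ((u * t - f u : ℝ) : EReal) ≤ fenchelIoi f t :=
          le_iSup (fun v : Set.Ioi (0:ℝ) => (((v:ℝ) * t - f v : ℝ) : EReal)) ⟨u, hu⟩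
        have heq : (u * t - (f u + (-f a + m * a - m)) : ℝ) = (u * t - f u) + C' := by
          rw [hC']; ring
        rw [heq, EReal.coe_add]
        exact add_le_add_left h1 _
      · rw [if_neg hua]
        push_neg at hua
        have h2 : ((a * t - f a : ℝ) : EReal) ≤ fenchelIoi f t :=
          le_iSup (fun v : Set.Ioi (0:ℝ) => (((v:ℝ) * t - f v : ℝ) : EReal)) ⟨a, ha⟩
        have hr : (u * t - (m * u - m) : ℝ) ≤ (a * t - f a) + C' := by
          have : (t - m) * u ≤ (t - m) * a :=
            mul_le_mul_of_nonpos_left hua.le (by linarith)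
          rw [hC']; nlinarith
        calc ((u * t - (m * u - m) : ℝ) : EReal)
            ≤ (((a * t - f a) + C' : ℝ) : EReal) := EReal.coe_le_coe_iff.2 hr
          _ = ((a * t - f a : ℝ) : EReal) + (C' : EReal) := EReal.coe_add _ _
          _ ≤ fenchelIoi f t + (C' : EReal) := add_le_add_left h2 _
    · rw [← EReal.le_sub_iff_add_le (Or.inl (EReal.coe_ne_bot C'))
        (Or.inl (EReal.coe_ne_top C'))]
      refine iSup_le ?_
      rintro ⟨u, hu⟩
      rw [EReal.le_sub_iff_add_le (Or.inl (EReal.coe_ne_bot C'))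
        (Or.inl (EReal.coe_ne_top C')), ← EReal.coe_add]
      by_cases hua : u ≤ a
      · have heq : ((u * t - f u) + C' : ℝ) = u * t - g u := by
          rw [hg, if_pos hua, hC']; ring
        rw [heq]
        exact le_iSup (fun v : Set.Ioi (0:ℝ) => (((v:ℝ) * t - g v : ℝ) : EReal)) ⟨u, hu⟩
      · push_neg at hua
        have hle : ((u * t - f u) + C' : ℝ) ≤ u * t - g u := by
          rw [hg, if_neg (not_le.2 hua), hC']
          have := hkey u hua
          nlinarith
        calc (((u * t - f u) + C' : ℝ) : EReal)
            ≤ ((u * t - g u : ℝ) : EReal) := EReal.coe_le_coe_iff.2 hle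
          _ ≤ _ := le_iSup (fun v : Set.Ioi (0:ℝ) => (((v:ℝ) * t - g v : ℝ) : EReal)) ⟨u, hu⟩
  · intro ht
    rw [fenchelIoi, iSup_eq_top]
    intro b hb
    obtain ⟨r, hbr, -⟩ := EReal.exists_between_coe_real hb
    have htm : (0:ℝ) < t - m := by linarith
    set u : ℝ := max (a + 1) ((r - m) / (t - m) + 1) with hu_def
    have hua : a < u := lt_of_lt_of_le (by linarith) (le_max_left _ _)
    have hu0 : 0 < u := ha.trans hua
    refine ⟨⟨u, hu0⟩, lt_of_lt_of_le hbr ?_⟩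
    rw [EReal.coe_le_coe_iff, hg, if_neg (not_le.2 hua)]
    have h2 : (r - m) / (t - m) + 1 ≤ u := le_max_right _ _
    have h3 : (t - m) * ((r - m) / (t - m)) = r - m := by
      field_simp
    nlinarith [mul_le_mul_of_nonneg_left h2 htm.le]

/-- **Fenchel conjugate of the partially linearized function.** For `f`
convex, continuous, differentiable on `(0,∞)` with `f 1 = 0` and `β ≥ 0`, the Fenchel
conjugate of `f̄_β` equals `f* + C'_{f,β}` for `t ≤ f'(1/(1+β))` and `+∞` for
`t > f'(1/(1+β))`, where `C'_{f,β} = f(1/(1+β)) − f'(1/(1+β))·(1/(1+β)) + f'(1/(1+β))`. -/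
theorem fenchel_partiallyLinearized
    (f f' : ℝ → ℝ) (β : ℝ) (hβ : 0 ≤ β)
    (hconv : ConvexOn ℝ (Set.Ioi 0) f)
    (hcont : ContinuousOn f (Set.Ioi 0))
    (hderiv : ∀ u ∈ Set.Ioi (0 : ℝ), HasDerivAt f (f' u) u)
    (hf1 : f 1 = 0) (t : ℝ) :
    (t ≤ f' (1 / (1 + β)) →
      fenchelIoi (partiallyLinearized f f' β) t =
        fenchelIoi f t +
          ((f (1 / (1 + β)) - f' (1 / (1 + β)) * (1 / (1 + β)) + f' (1 / (1 + β)) : ℝ) :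
            EReal)) ∧
    (f' (1 / (1 + β)) < t → fenchelIoi (partiallyLinearized f f' β) t = ⊤) := by
  have ha : (0:ℝ) < 1 / (1 + β) := by positivity
  exact fenchel_aux f f' (partiallyLinearized f f' β) (1 / (1 + β)) ha hconv
    (hderiv _ ha) t (fun u => rfl)
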